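/- For every integer n ≥ 2, the function g(x) = xⁿ + n·xⁿ⁻¹ − 1 is strictly increasing on [0,1], satisfies g((1/(n+1))^(1/(n-1))) < 0 and g((1/n)^(1/(n-1))) > 0, and hence has a unique root x₀ in the open interval ((1/(n+1))^(1/(n-1)), (1/n)^(1/(n-1))). -/

import Mathlib

theorem stmt_1 (n : ℕ) (hn : 2 ≤ n) :
    StrictMonoOn (fun x : ℝ => x^n + n * x^(n-1) - 1) (Set.Icc 0 1) ∧
    (fun x : ℝ => x^n + n * x^(n-1) - 1) (((1:ℝ)/(n+1)) ^ ((1:ℝ)/(n-1))) < 0 ∧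
    (fun x : ℝ => x^n + n * x^(n-1) - 1) (((1:ℝ)/n) ^ ((1:ℝ)/(n-1))) > 0 ∧
    ∃! x₀ : ℝ, x₀ ∈ Set.Ioo (((1:ℝ)/(n+1)) ^ ((1:ℝ)/(n-1))) (((1:ℝ)/n) ^ ((1:ℝ)/(n-1))) ∧
      x₀^n + n * x₀^(n-1) - 1 = 0 := by
  have hn2 : (2:ℝ) ≤ (n:ℝ) := by exact_mod_cast hn
  have hnpos : (0:ℝ) < n := by linarith
  have hexp : (0:ℝ) < 1 / ((n:ℝ) - 1) := div_pos one_pos (by linarith)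
  have hcast : ((n - 1 : ℕ) : ℝ) = (n:ℝ) - 1 := by
    have : 1 ≤ n := by omega
    push_cast [Nat.cast_sub this]; ring
  -- key: (c ^ (1/(n-1)))^(n-1) = c for 0 < c
  have key : ∀ c : ℝ, 0 < c → (c ^ ((1:ℝ)/((n:ℝ)-1))) ^ (n - 1) = c := by
    intro c hc
    rw [← Real.rpow_natCast (c ^ ((1:ℝ)/((n:ℝ)-1))) (n-1), ← Real.rpow_mul hc.le,
      hcast, one_div, inv_mul_cancel₀ (by linarith), Real.rpow_one]
  have hpow_n : ∀ x : ℝ, x ^ n = x ^ (n-1) * x := by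
    intro x
    rw [← pow_succ]
    congr 1; omega
  set a := ((1:ℝ)/((n:ℝ)+1)) ^ ((1:ℝ)/((n:ℝ)-1)) with ha_def
  set b := ((1:ℝ)/(n:ℝ)) ^ ((1:ℝ)/((n:ℝ)-1)) with hb_def
  have hc1 : (0:ℝ) < 1/((n:ℝ)+1) := by positivity
  have hc2 : (0:ℝ) < 1/(n:ℝ) := by positivity
  have ha_pow : a ^ (n-1) = 1/((n:ℝ)+1) := key _ hc1
  have hb_pow : b ^ (n-1) = 1/(n:ℝ) := key _ hc2
  have ha_pos : 0 < a := Real.rpow_pos_of_pos hc1 _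
  have hb_pos : 0 < b := Real.rpow_pos_of_pos hc2 _
  have hab : a < b := by
    apply Real.rpow_lt_rpow hc1.le _ hexp
    rw [div_lt_div_iff₀ (by linarith) (by linarith)]; linarith
  have hb_le1 : b ≤ 1 := by
    apply Real.rpow_le_one hc2.le _ hexp.le
    rw [div_le_one (by linarith)]; linarith
  have ha_lt1 : a < 1 := lt_of_lt_of_le hab hb_le1
  -- strict mono
  have hmono : StrictMonoOn (fun x : ℝ => x^n + n * x^(n-1) - 1) (Set.Icc 0 1) := by
    intro x hx y hy hxy
    have h1 : x ^ n < y ^ n := pow_lt_pow_left₀ hxy hx.1 (by omega)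
    have h2 : x ^ (n-1) < y ^ (n-1) := pow_lt_pow_left₀ hxy hx.1 (by omega)
    simp only
    nlinarith
  have hga : a^n + n * a^(n-1) - 1 < 0 := by
    rw [hpow_n, ha_pow]
    have : (1:ℝ)/((n:ℝ)+1) * a + (n:ℝ) * (1/((n:ℝ)+1)) - 1 = (a - 1)/((n:ℝ)+1) := by
      field_simp; ring
    rw [this]
    apply div_neg_of_neg_of_pos (by linarith) (by linarith)
  have hgb : b^n + n * b^(n-1) - 1 > 0 := by
    rw [hpow_n, hb_pow]
    have : (1:ℝ)/(n:ℝ) * b + (n:ℝ) * (1/(n:ℝ)) - 1 = b/(n:ℝ) := by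
      field_simp
      ring
    rw [this]
    positivity
  refine ⟨hmono, hga, hgb, ?_⟩
  have hcont : ContinuousOn (fun x : ℝ => x^n + n * x^(n-1) - 1) (Set.Icc a b) := by
    fun_prop
  have hsub : Set.Ioo a b ⊆ Set.Icc (0:ℝ) 1 := fun x hx =>
    ⟨le_of_lt (lt_trans ha_pos hx.1), le_of_lt (lt_of_lt_of_le hx.2 hb_le1)⟩
  have hIVT := intermediate_value_Ioo hab.le hcont
  have h0 : (0:ℝ) ∈ Set.Ioo ((fun x : ℝ => x^n + n * x^(n-1) - 1) a)
      ((fun x : ℝ => x^n + n * x^(n-1) - 1) b) := ⟨hga, hgb⟩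
  obtain ⟨x₀, hx₀, hgx₀⟩ := hIVT h0
  refine ⟨x₀, ⟨hx₀, hgx₀⟩, ?_⟩
  rintro y ⟨hy, hgy⟩
  have := hmono.injOn (hsub hy) (hsub hx₀)
  exact this (by simp only [hgy, hgx₀])
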